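/- One has T·δ(T) → 0 as T → 0⁺, and consequently for every T > 0, δ(T) = (1/T) ∫₀^T D(T') dT'. -/

import Mathlib

open MeasureTheory Real Filter Topology

noncomputable section

variable {𝓔 : Type*} [MeasurableSpace 𝓔]


private lemma exp_mul_le' {β x : ℝ} (hβ : 0 < β) (hx : 0 ≤ x) :
    x * Real.exp (-β * x) ≤ (2/β) * Real.exp (-(β/2) * x) := by
  have h1 : (β/2) * x ≤ Real.exp ((β/2) * x) := by
    have := Real.add_one_le_exp ((β/2)*x); linarith
  have hx2 : x ≤ (2/β) * Real.exp ((β/2)*x) := by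
    have h2 := mul_le_mul_of_nonneg_left h1 (by positivity : (0:ℝ) ≤ 2/β)
    have h3 : (2/β) * ((β/2)*x) = x := by field_simp
    linarith
  calc x * Real.exp (-β * x) ≤ ((2/β) * Real.exp ((β/2)*x)) * Real.exp (-β*x) :=
        mul_le_mul_of_nonneg_right hx2 (Real.exp_pos _).le
    _ = (2/β) * Real.exp (-(β/2) * x) := by
        rw [mul_assoc, ← Real.exp_add]; ring_nf

private lemma integrable_mul_exp (μ : Measure 𝓔) (f : 𝓔 → ℝ) (hf : Measurable f)
    (hf0 : ∀ᵐ ζ ∂μ, 0 ≤ f ζ)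
    (hInt : ∀ β : ℝ, 0 < β → Integrable (fun ζ => Real.exp (-β * f ζ)) μ)
    {β : ℝ} (hβ : 0 < β) :
    Integrable (fun ζ => f ζ * Real.exp (-β * f ζ)) μ := by
  refine ((hInt (β/2) (by positivity)).const_mul (2/β)).mono' ?_ ?_
  · exact (hf.mul ((hf.const_mul (-β)).exp)).aestronglyMeasurable
  · filter_upwards [hf0] with ζ h0
    rw [Real.norm_of_nonneg (mul_nonneg h0 (Real.exp_pos _).le)]
    have := exp_mul_le' hβ h0
    simpa [mul_comm] using this

private lemma integrable_sq_mul_exp (μ : Measure 𝓔) (f : 𝓔 → ℝ) (hf : Measurable f)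
    (hf0 : ∀ᵐ ζ ∂μ, 0 ≤ f ζ)
    (hInt : ∀ β : ℝ, 0 < β → Integrable (fun ζ => Real.exp (-β * f ζ)) μ)
    {β : ℝ} (hβ : 0 < β) :
    Integrable (fun ζ => (f ζ)^2 * Real.exp (-β * f ζ)) μ := by
  refine ((integrable_mul_exp μ f hf hf0 hInt (half_pos hβ)).const_mul (2/β)).mono' ?_ ?_
  · exact ((hf.pow_const 2).mul ((hf.const_mul (-β)).exp)).aestronglyMeasurable
  · filter_upwards [hf0] with ζ h0
    rw [Real.norm_of_nonneg (mul_nonneg (sq_nonneg _) (Real.exp_pos _).le)]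
    have h1 : (f ζ)^2 * Real.exp (-β * f ζ) = f ζ * (f ζ * Real.exp (-β * f ζ)) := by ring
    rw [h1]
    calc f ζ * (f ζ * Real.exp (-β * f ζ))
        ≤ f ζ * ((2/β) * Real.exp (-(β/2) * f ζ)) :=
          mul_le_mul_of_nonneg_left (exp_mul_le' hβ h0) h0
      _ = (2/β) * (f ζ * Real.exp (-(β/2) * f ζ)) := by ring

private lemma integral_exp_pos (μ : Measure 𝓔) (hμ : μ Set.univ ≠ 0) (f : 𝓔 → ℝ) {β : ℝ}
    (hInt : Integrable (fun ζ => Real.exp (-β * f ζ)) μ) :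
    0 < ∫ ζ, Real.exp (-β * f ζ) ∂μ := by
  rw [integral_pos_iff_support_of_nonneg (fun ζ => (Real.exp_pos _).le) hInt]
  have h : Function.support (fun ζ => Real.exp (-β * f ζ)) = Set.univ := by
    ext ζ; simp [Function.mem_support, (Real.exp_pos _).ne']
  rw [h]
  exact pos_iff_ne_zero.2 hμ




private lemma tendsto_ratio (μ : Measure 𝓔) (f : 𝓔 → ℝ) (hf : Measurable f)
    (hf0 : ∀ᵐ ζ ∂μ, 0 ≤ f ζ)
    (hpos : ∀ δ : ℝ, 0 < δ → μ {ζ | f ζ < δ} ≠ 0)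
    (hInt : ∀ β : ℝ, 0 < β → Integrable (fun ζ => Real.exp (-β * f ζ)) μ) :
    Tendsto (fun β => (∫ ζ, f ζ * Real.exp (-β * f ζ) ∂μ) / (∫ ζ, Real.exp (-β * f ζ) ∂μ))
      atTop (𝓝 0) := by
  set N : ℝ → ℝ := fun β => ∫ ζ, f ζ * Real.exp (-β * f ζ) ∂μ with hN
  set Z : ℝ → ℝ := fun β => ∫ ζ, Real.exp (-β * f ζ) ∂μ with hZdef
  have hNnonneg : ∀ β : ℝ, 0 ≤ N β := fun β =>
    integral_nonneg_of_ae (hf0.mono fun ζ h0 => mul_nonneg h0 (Real.exp_pos _).le)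
  have hfin : ∀ δ : ℝ, 0 < δ → μ {ζ | f ζ < δ} ≠ ⊤ := by
    intro δ hδ
    have hsub : {ζ | f ζ < δ} ⊆ {ζ | Real.exp (-1 * δ) ≤ Real.exp (-1 * f ζ)} := by
      intro ζ hζ
      exact Real.exp_le_exp.2 (by nlinarith [Set.mem_setOf_eq ▸ hζ])
    exact ne_top_of_le_ne_top ((hInt 1 one_pos).measure_ge_lt_top (Real.exp_pos _)).ne
      (measure_mono hsub)
  -- lower bound for Z
  have hZlow : ∀ δ : ℝ, 0 < δ → ∀ β : ℝ, 0 < β →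
      Real.exp (-β * δ) * (μ {ζ | f ζ < δ}).toReal ≤ Z β := by
    intro δ hδ β hβ
    have hs : MeasurableSet {ζ | f ζ < δ} := measurableSet_lt hf measurable_const
    calc Real.exp (-β * δ) * (μ {ζ | f ζ < δ}).toReal
        ≤ ∫ ζ in {ζ | f ζ < δ}, Real.exp (-β * f ζ) ∂μ := by
          refine le_trans (le_of_eq ?_) (setIntegral_ge_of_const_le_real (c := Real.exp (-β * δ)) hs (hfin δ hδ) (fun ζ hζ => ?_) ((hInt β hβ).integrableOn))
          · simp only [measureReal_def]
          exact Real.exp_le_exp.2 (by nlinarith [Set.mem_setOf_eq ▸ hζ])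
      _ ≤ Z β := setIntegral_le_integral (hInt β hβ)
        (Filter.Eventually.of_forall fun ζ => (Real.exp_pos _).le)
  have hZpos : ∀ β : ℝ, 0 < β → 0 < Z β := by
    intro β hβ
    have h1 := hZlow 1 one_pos β hβ
    have h2 : 0 < (μ {ζ | f ζ < 1}).toReal :=
      ENNReal.toReal_pos (hpos 1 one_pos) (hfin 1 one_pos)
    nlinarith [Real.exp_pos (-β * (1:ℝ))]
  -- main estimate
  rw [tendsto_order]
  constructor
  · intro a ha
    refine Filter.eventually_atTop.2 ⟨1, fun β hβ => ?_⟩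
    have := div_nonneg (hNnonneg β) (hZpos β (by linarith)).le
    linarith
  · intro a ha
    set δ : ℝ := a / 2 with hδdef
    have hδ : 0 < δ := by positivity
    set m : ℝ := (μ {ζ | f ζ < δ/2}).toReal with hm
    have hmpos : 0 < m :=
      ENNReal.toReal_pos (hpos (δ/2) (by positivity)) (hfin (δ/2) (by positivity))
    set C : ℝ := N 1 with hC
    -- N β ≤ δ * Z β + exp (-(β-1)*δ) * C for β ≥ 1
    have hNup : ∀ β : ℝ, 1 ≤ β → N β ≤ δ * Z β + Real.exp (-(β-1)*δ) * C := by
      intro β hβ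
      have hβ0 : 0 < β := by linarith
      have hint1 : Integrable (fun ζ => δ * Real.exp (-β * f ζ)
          + Real.exp (-(β-1)*δ) * (f ζ * Real.exp (-1 * f ζ))) μ :=
        ((hInt β hβ0).const_mul δ).add
          ((integrable_mul_exp μ f hf hf0 hInt one_pos).const_mul _)
      have hle : ∀ᵐ ζ ∂μ, f ζ * Real.exp (-β * f ζ)
          ≤ δ * Real.exp (-β * f ζ) + Real.exp (-(β-1)*δ) * (f ζ * Real.exp (-1 * f ζ)) := by
        filter_upwards [hf0] with ζ h0
        rcases le_or_gt (f ζ) δ with hc | hc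
        · have : f ζ * Real.exp (-β * f ζ) ≤ δ * Real.exp (-β * f ζ) :=
            mul_le_mul_of_nonneg_right hc (Real.exp_pos _).le
          nlinarith [mul_nonneg (mul_nonneg h0 (Real.exp_pos (-1 * f ζ)).le)
            (Real.exp_pos (-(β-1)*δ)).le]
        · have he : Real.exp (-β * f ζ) = Real.exp (-(β-1) * f ζ) * Real.exp (-1 * f ζ) := by
            rw [← Real.exp_add]; ring_nf
          have he2 : Real.exp (-(β-1) * f ζ) ≤ Real.exp (-(β-1)*δ) :=
            Real.exp_le_exp.2 (by nlinarith)
          have : f ζ * Real.exp (-β * f ζ)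
              ≤ Real.exp (-(β-1)*δ) * (f ζ * Real.exp (-1 * f ζ)) := by
            rw [he]
            calc f ζ * (Real.exp (-(β-1) * f ζ) * Real.exp (-1 * f ζ))
                = Real.exp (-(β-1) * f ζ) * (f ζ * Real.exp (-1 * f ζ)) := by ring
              _ ≤ Real.exp (-(β-1)*δ) * (f ζ * Real.exp (-1 * f ζ)) :=
                  mul_le_mul_of_nonneg_right he2 (mul_nonneg h0 (Real.exp_pos _).le)
          nlinarith [mul_pos hδ (Real.exp_pos (-β * f ζ))]
      calc N β ≤ ∫ ζ, (δ * Real.exp (-β * f ζ)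
            + Real.exp (-(β-1)*δ) * (f ζ * Real.exp (-1 * f ζ))) ∂μ :=
          integral_mono_ae (integrable_mul_exp μ f hf hf0 hInt hβ0) hint1 hle
        _ = δ * Z β + Real.exp (-(β-1)*δ) * C := by
          rw [integral_add (((hInt β hβ0)).const_mul δ)
            ((integrable_mul_exp μ f hf hf0 hInt one_pos).const_mul _),
            integral_const_mul, integral_const_mul]
    -- eventual smallness of the exponential term
    have htend : Tendsto (fun β : ℝ => (C * Real.exp δ) * Real.exp (-(δ/2) * β)) atTop (𝓝 0) := by
      have h1 : Tendsto (fun β : ℝ => -(δ/2) * β) atTop atBot :=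
        Tendsto.const_mul_atTop_of_neg (by linarith) tendsto_id
      have h2 := Real.tendsto_exp_atBot.comp h1
      simpa using h2.const_mul (C * Real.exp δ)
    have hev : ∀ᶠ β : ℝ in atTop, (C * Real.exp δ) * Real.exp (-(δ/2) * β) < δ * m :=
      htend.eventually_lt_const (by positivity)
    filter_upwards [hev, Filter.eventually_ge_atTop (1:ℝ)] with β h1 h2
    have hβ0 : 0 < β := by linarith
    have hZb := hZpos β hβ0
    rw [div_lt_iff₀ hZb]
    have key : Real.exp (-(β-1)*δ) * C < δ * (Real.exp (-β * (δ/2)) * m) := by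
      have h3 := mul_lt_mul_of_pos_right h1 (Real.exp_pos (-(δ/2) * β))
      calc Real.exp (-(β-1)*δ) * C
          = (C * Real.exp δ) * Real.exp (-(δ/2) * β) * Real.exp (-(δ/2) * β) := by
            rw [mul_assoc, ← Real.exp_add, mul_comm _ C, mul_assoc, ← Real.exp_add]
            ring_nf
        _ < δ * m * Real.exp (-(δ/2) * β) := h3
        _ = δ * (Real.exp (-β * (δ/2)) * m) := by ring_nf
    have hZlow2 := hZlow (δ/2) (by positivity) β hβ0
    rw [← hm] at hZlow2
    calc N β ≤ δ * Z β + Real.exp (-(β-1)*δ) * C := hNup β h2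
      _ < δ * Z β + δ * (Real.exp (-β * (δ/2)) * m) := by linarith
      _ ≤ δ * Z β + δ * Z β := by nlinarith
      _ = a * Z β := by rw [hδdef]; ring




private lemma ball_half {β b : ℝ} (hβ : 0 < β) (hb : b ∈ Metric.ball β (β/2)) : β/2 < b := by
  have := abs_lt.1 (mem_ball_iff_norm.1 hb)
  linarith [this.1]

private lemma hasDerivAt_Zfun (μ : Measure 𝓔) (f : 𝓔 → ℝ) (hf : Measurable f)
    (hf0 : ∀ᵐ ζ ∂μ, 0 ≤ f ζ)
    (hInt : ∀ β : ℝ, 0 < β → Integrable (fun ζ => Real.exp (-β * f ζ)) μ)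
    {β : ℝ} (hβ : 0 < β) :
    HasDerivAt (fun b => ∫ ζ, Real.exp (-b * f ζ) ∂μ)
      (-∫ ζ, f ζ * Real.exp (-β * f ζ) ∂μ) β := by
  have h := hasDerivAt_integral_of_dominated_loc_of_deriv_le (μ := μ) (x₀ := β)
    (F := fun b ζ => Real.exp (-b * f ζ))
    (F' := fun b ζ => -(f ζ * Real.exp (-b * f ζ)))
    (bound := fun ζ => f ζ * Real.exp (-(β/2) * f ζ))
    (Metric.ball_mem_nhds β (half_pos hβ))
    (Filter.Eventually.of_forall fun b =>
      ((hf.const_mul (-b)).exp).aestronglyMeasurable)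
    (hInt β hβ)
    (((hf.mul ((hf.const_mul (-β)).exp)).neg).aestronglyMeasurable)
    ?_ (integrable_mul_exp μ f hf hf0 hInt (half_pos hβ)) ?_
  · have h2 := h.2
    simp only [integral_neg] at h2
    exact h2
  · filter_upwards [hf0] with ζ h0
    intro b hb
    have hb2 : β/2 < b := ball_half hβ hb
    rw [norm_neg, Real.norm_of_nonneg (mul_nonneg h0 (Real.exp_pos _).le)]
    exact mul_le_mul_of_nonneg_left (Real.exp_le_exp.2 (by nlinarith)) h0
  · filter_upwards [] with ζ
    intro b _
    have h1 : HasDerivAt (fun b : ℝ => -b * f ζ) (-(f ζ)) b := by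
      simpa using ((hasDerivAt_id b).neg.mul_const (f ζ))
    have := h1.exp
    exact this.congr_deriv (by ring)

private lemma hasDerivAt_Nfun (μ : Measure 𝓔) (f : 𝓔 → ℝ) (hf : Measurable f)
    (hf0 : ∀ᵐ ζ ∂μ, 0 ≤ f ζ)
    (hInt : ∀ β : ℝ, 0 < β → Integrable (fun ζ => Real.exp (-β * f ζ)) μ)
    {β : ℝ} (hβ : 0 < β) :
    HasDerivAt (fun b => ∫ ζ, f ζ * Real.exp (-b * f ζ) ∂μ)
      (-∫ ζ, (f ζ)^2 * Real.exp (-β * f ζ) ∂μ) β := by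
  have h := hasDerivAt_integral_of_dominated_loc_of_deriv_le (μ := μ) (x₀ := β)
    (F := fun b ζ => f ζ * Real.exp (-b * f ζ))
    (F' := fun b ζ => -((f ζ)^2 * Real.exp (-b * f ζ)))
    (bound := fun ζ => (f ζ)^2 * Real.exp (-(β/2) * f ζ))
    (Metric.ball_mem_nhds β (half_pos hβ))
    (Filter.Eventually.of_forall fun b =>
      (hf.mul ((hf.const_mul (-b)).exp)).aestronglyMeasurable)
    (integrable_mul_exp μ f hf hf0 hInt hβ)
    ((((hf.pow_const 2).mul ((hf.const_mul (-β)).exp)).neg).aestronglyMeasurable)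
    ?_ (integrable_sq_mul_exp μ f hf hf0 hInt (half_pos hβ)) ?_
  · have h2 := h.2
    simp only [integral_neg] at h2
    exact h2
  · filter_upwards [hf0] with ζ h0
    intro b hb
    have hb2 : β/2 < b := ball_half hβ hb
    rw [norm_neg, Real.norm_of_nonneg (mul_nonneg (sq_nonneg _) (Real.exp_pos _).le)]
    exact mul_le_mul_of_nonneg_left (Real.exp_le_exp.2 (by nlinarith)) (sq_nonneg _)
  · filter_upwards [] with ζ
    intro b _
    have h1 : HasDerivAt (fun b : ℝ => -b * f ζ) (-(f ζ)) b := by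
      simpa using ((hasDerivAt_id b).neg.mul_const (f ζ))
    have := h1.exp.const_mul (f ζ)
    exact this.congr_deriv (by ring)

private lemma sq_integral_le (μ : Measure 𝓔) (hμ : μ Set.univ ≠ 0) (f : 𝓔 → ℝ)
    (hf : Measurable f) (hf0 : ∀ᵐ ζ ∂μ, 0 ≤ f ζ)
    (hInt : ∀ β : ℝ, 0 < β → Integrable (fun ζ => Real.exp (-β * f ζ)) μ)
    {β : ℝ} (hβ : 0 < β) (hZpos : 0 < ∫ ζ, Real.exp (-β * f ζ) ∂μ) :
    (∫ ζ, f ζ * Real.exp (-β * f ζ) ∂μ)^2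
      ≤ (∫ ζ, (f ζ)^2 * Real.exp (-β * f ζ) ∂μ) * (∫ ζ, Real.exp (-β * f ζ) ∂μ) := by
  set Z : ℝ := ∫ ζ, Real.exp (-β * f ζ) ∂μ with hZ
  set N : ℝ := ∫ ζ, f ζ * Real.exp (-β * f ζ) ∂μ with hN
  set M : ℝ := ∫ ζ, (f ζ)^2 * Real.exp (-β * f ζ) ∂μ with hM
  set c : ℝ := N / Z with hc
  have hcZ : c * Z = N := div_mul_cancel₀ _ hZpos.ne'
  have heq : (fun ζ => (f ζ - c)^2 * Real.exp (-β * f ζ))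
      = fun ζ => ((f ζ)^2 * Real.exp (-β * f ζ) - (2*c) * (f ζ * Real.exp (-β * f ζ)))
        + c^2 * Real.exp (-β * f ζ) := funext fun ζ => by ring
  have key : 0 ≤ ∫ ζ, (f ζ - c)^2 * Real.exp (-β * f ζ) ∂μ :=
    integral_nonneg fun ζ => mul_nonneg (sq_nonneg _) (Real.exp_pos _).le
  have i1 := integrable_sq_mul_exp μ f hf hf0 hInt hβ
  have i2 := (integrable_mul_exp μ f hf hf0 hInt hβ).const_mul (2*c)
  have i12 : Integrable (fun ζ => (f ζ)^2 * Real.exp (-β * f ζ)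
      - (2*c) * (f ζ * Real.exp (-β * f ζ))) μ := i1.sub i2
  have expand : ∫ ζ, (f ζ - c)^2 * Real.exp (-β * f ζ) ∂μ = (M - (2*c) * N) + c^2 * Z := by
    rw [heq, integral_add i12 ((hInt β hβ).const_mul (c^2)), integral_sub i1 i2,
      integral_const_mul, integral_const_mul]
  rw [expand] at key
  nlinarith [mul_nonneg hZpos.le key, hcZ]


/-- The (thermodynamic) number of internal degrees of freedom
`δ(T) = (2/(k_B T)) ⬝ (∫ ε̄ e^{-ε̄/(k_B T)} dμ) / (∫ e^{-ε̄/(k_B T)} dμ)`, `ε̄ = ε - ε0`. -/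
def deltaFun (μ : Measure 𝓔) (ε : 𝓔 → ℝ) (ε0 : ℝ) (kB T : ℝ) : ℝ :=
  (2 / (kB * T)) *
    ((∫ ζ, (ε ζ - ε0) * Real.exp (-(ε ζ - ε0) / (kB * T)) ∂μ) /
      (∫ ζ, Real.exp (-(ε ζ - ε0) / (kB * T)) ∂μ))

/-- `D(T) = d(T δ(T))/dT`. -/
def Dfun (μ : Measure 𝓔) (ε : 𝓔 → ℝ) (ε0 : ℝ) (kB T : ℝ) : ℝ :=
  deriv (fun s => s * deltaFun μ ε ε0 kB s) T

/-- **Proposition (δ is the average of D).**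
`T δ(T) → 0` as `T → 0⁺`, and consequently `δ(T) = (1/T) ∫₀^T D(T') dT'` for every `T > 0`. -/
theorem delta_eq_average_of_D
    (μ : Measure 𝓔) (hμ : μ Set.univ ≠ 0)
    (kB : ℝ) (hkB : 0 < kB)
    (ε : 𝓔 → ℝ) (hε : Measurable ε) (ε0 : ℝ)
    (hlow : ∀ᵐ ζ ∂μ, ε0 ≤ ε ζ)
    (hsup : ∀ R : ℝ, (∀ᵐ ζ ∂μ, R ≤ ε ζ) → R ≤ ε0)
    (hZ : ∀ β : ℝ, 0 < β → Integrable (fun ζ => Real.exp (-β * (ε ζ - ε0))) μ) :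
    Tendsto (fun T => T * deltaFun μ ε ε0 kB T) (nhdsWithin 0 (Set.Ioi 0)) (nhds 0) ∧
    ∀ T : ℝ, 0 < T →
      deltaFun μ ε ε0 kB T = (1 / T) * ∫ T' in (0 : ℝ)..T, Dfun μ ε ε0 kB T' := by
  set f : 𝓔 → ℝ := fun ζ => ε ζ - ε0 with hfdef
  have hf : Measurable f := hε.sub measurable_const
  have hf0 : ∀ᵐ ζ ∂μ, 0 ≤ f ζ := hlow.mono fun ζ h => sub_nonneg.2 h
  have hInt : ∀ β : ℝ, 0 < β → Integrable (fun ζ => Real.exp (-β * f ζ)) μ := hZ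
  have hpos : ∀ δ : ℝ, 0 < δ → μ {ζ | f ζ < δ} ≠ 0 := by
    intro δ hδ h0
    have hae : ∀ᵐ ζ ∂μ, ε0 + δ ≤ ε ζ := by
      rw [ae_iff]
      convert h0 using 2
      ext ζ
      simp only [Set.mem_setOf_eq, not_le, hfdef]
      constructor <;> intro h <;> linarith
    linarith [hsup (ε0 + δ) hae]
  set Zf : ℝ → ℝ := fun β => ∫ ζ, Real.exp (-β * f ζ) ∂μ with hZf
  set Nf : ℝ → ℝ := fun β => ∫ ζ, f ζ * Real.exp (-β * f ζ) ∂μ with hNf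
  set Mf : ℝ → ℝ := fun β => ∫ ζ, (f ζ)^2 * Real.exp (-β * f ζ) ∂μ with hMf
  have hZpos : ∀ β : ℝ, 0 < β → 0 < Zf β := fun β hβ => integral_exp_pos μ hμ f (hInt β hβ)
  -- rewriting T δ(T) through the partition function
  have hFeq : ∀ T : ℝ, 0 < T → T * deltaFun μ ε ε0 kB T
      = (2/kB) * (Nf (1/(kB*T)) / Zf (1/(kB*T))) := by
    intro T hT
    have harg : ∀ x : ℝ, -x/(kB*T) = -(1/(kB*T))*x := fun x => by ring
    rw [deltaFun]
    simp only [harg]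
    rw [hNf, hZf]
    have h2 : ∀ r : ℝ, T * (2/(kB*T) * r) = (2/kB) * r := by
      intro r
      field_simp
    exact h2 _
  -- Part 1
  have hβtend : Tendsto (fun T : ℝ => 1/(kB*T)) (nhdsWithin 0 (Set.Ioi 0)) atTop := by
    have h1 : Tendsto (fun T : ℝ => kB*T) (nhdsWithin 0 (Set.Ioi 0))
        (nhdsWithin 0 (Set.Ioi 0)) := by
      rw [tendsto_nhdsWithin_iff]
      constructor
      · have hc : Continuous fun T : ℝ => kB * T := continuous_const.mul continuous_id
        have h0 := hc.tendsto 0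
        rw [mul_zero] at h0
        exact h0.mono_left nhdsWithin_le_nhds
      · exact eventually_mem_nhdsWithin.mono fun T hT => mul_pos hkB hT
    refine (tendsto_inv_nhdsGT_zero.comp h1).congr fun T => ?_
    simp [Function.comp, one_div]
  have hR := tendsto_ratio μ f hf hf0 hpos hInt
  have hcomp := ((hR.comp hβtend).const_mul (2/kB))
  have part1 : Tendsto (fun T => T * deltaFun μ ε ε0 kB T)
      (nhdsWithin 0 (Set.Ioi 0)) (nhds 0) := by
    have h3 : Tendsto (fun T : ℝ => (2/kB) * (Nf (1/(kB*T)) / Zf (1/(kB*T))))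
        (nhdsWithin 0 (Set.Ioi 0)) (nhds 0) := by
      rw [mul_zero] at hcomp
      exact hcomp.congr fun T => rfl
    refine h3.congr' ?_
    filter_upwards [eventually_mem_nhdsWithin] with T hT
    exact (hFeq T hT).symm
  refine ⟨part1, ?_⟩
  -- Part 2
  set G : ℝ → ℝ := fun s => (2/kB) *
      ((((Nf (1/(kB*s)))^2 - Mf (1/(kB*s)) * Zf (1/(kB*s))) / (Zf (1/(kB*s)))^2)
        * (-(1/(kB*s^2)))) with hGdef
  have hb : ∀ s : ℝ, 0 < s → HasDerivAt (fun u : ℝ => 1/(kB*u)) (-(1/(kB*s^2))) s := by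
    intro s hs
    have h1 : HasDerivAt (fun u : ℝ => kB*u) kB s := by
      simpa using (hasDerivAt_id s).const_mul kB
    have h2 := h1.inv (by positivity : kB*s ≠ 0)
    have h3 : -kB/(kB*s)^2 = -(1/(kB*s^2)) := by
      field_simp
    simpa [one_div, h3, Pi.inv_def] using h2
  have hG : ∀ s : ℝ, 0 < s →
      HasDerivAt (fun u : ℝ => u * deltaFun μ ε ε0 kB u) (G s) s := by
    intro s hs
    have hβpos : 0 < 1/(kB*s) := by positivity
    have hZd := hasDerivAt_Zfun μ f hf hf0 hInt hβpos
    have hNd := hasDerivAt_Nfun μ f hf hf0 hInt hβpos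
    have hq : HasDerivAt (fun β => Nf β / Zf β)
        (((-Mf (1/(kB*s))) * Zf (1/(kB*s)) - Nf (1/(kB*s)) * (-Nf (1/(kB*s))))
          / (Zf (1/(kB*s)))^2) (1/(kB*s)) :=
      HasDerivAt.div hNd hZd (hZpos _ hβpos).ne'
    have hcomp2 := HasDerivAt.comp s hq (hb s hs)
    have hG0 := hcomp2.const_mul (2/kB)
    have hG1 : HasDerivAt (fun u : ℝ => (2/kB) * (Nf (1/(kB*u)) / Zf (1/(kB*u)))) (G s) s := by
      exact hG0.congr_deriv (by simp only [hGdef]; ring)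
    refine hG1.congr_of_eventuallyEq ?_
    filter_upwards [Ioi_mem_nhds hs] with u hu
    exact hFeq u hu
  have hGpos : ∀ s : ℝ, 0 < s → 0 ≤ G s := by
    intro s hs
    have hβpos : 0 < 1/(kB*s) := by positivity
    have hsq := sq_integral_le μ hμ f hf hf0 hInt hβpos (hZpos _ hβpos)
    have hnum : (Nf (1/(kB*s)))^2 - Mf (1/(kB*s)) * Zf (1/(kB*s)) ≤ 0 := by
      rw [hNf, hMf, hZf]
      simpa using hsq
    have h1 : (((Nf (1/(kB*s)))^2 - Mf (1/(kB*s)) * Zf (1/(kB*s))) / (Zf (1/(kB*s)))^2) ≤ 0 :=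
      div_nonpos_of_nonpos_of_nonneg hnum (sq_nonneg _)
    have h2 : -(1/(kB*s^2)) ≤ (0:ℝ) := by
      have : (0:ℝ) < 1/(kB*s^2) := by positivity
      linarith
    rw [hGdef]
    have h4 : 0 ≤ (((Nf (1/(kB*s)))^2 - Mf (1/(kB*s)) * Zf (1/(kB*s))) / (Zf (1/(kB*s)))^2)
        * (-(1/(kB*s^2))) := by nlinarith
    exact mul_nonneg (by positivity) h4
  intro T hT
  have hg0 : (0:ℝ) * deltaFun μ ε ε0 kB 0 = 0 := zero_mul _
  have hcont : ContinuousOn (fun u : ℝ => u * deltaFun μ ε ε0 kB u) (Set.Icc 0 T) := by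
    intro x hx
    rcases eq_or_lt_of_le hx.1 with h0 | h0
    · subst h0
      have hmono : nhdsWithin (0:ℝ) (Set.Icc 0 T) ≤ nhdsWithin 0 (Set.Ici 0) :=
        nhdsWithin_mono _ Set.Icc_subset_Ici_self
      have hins : Set.Ici (0:ℝ) = insert 0 (Set.Ioi 0) := by
        rw [Set.Ioi_insert]
      have htend : Tendsto (fun u : ℝ => u * deltaFun μ ε ε0 kB u)
          (nhdsWithin 0 (Set.Ici 0)) (nhds 0) := by
        rw [hins, nhdsWithin_insert, tendsto_sup]
        constructor
        · simpa [hg0] using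
            tendsto_pure_nhds (fun u : ℝ => u * deltaFun μ ε ε0 kB u) 0
        · exact part1
      have : Tendsto (fun u : ℝ => u * deltaFun μ ε ε0 kB u)
          (nhdsWithin 0 (Set.Icc 0 T)) (nhds 0) := htend.mono_left hmono
      simpa [ContinuousWithinAt, hg0] using this
    · exact ((hG x h0).continuousAt).continuousWithinAt
  have hIoc : IntegrableOn G (Set.Ioc 0 T) volume :=
    intervalIntegral.integrableOn_deriv_of_nonneg hcont (fun x hx => hG x hx.1) (fun x hx => hGpos x hx.1)
  have hii : IntervalIntegrable G MeasureTheory.volume 0 T :=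
    (intervalIntegrable_iff_integrableOn_Ioc_of_le hT.le).2 hIoc
  have hftc := intervalIntegral.integral_eq_sub_of_hasDeriv_right_of_le hT.le hcont
    (fun x hx => (hG x hx.1).hasDerivWithinAt) hii
  have hDG : ∫ T' in (0:ℝ)..T, Dfun μ ε ε0 kB T' = ∫ T' in (0:ℝ)..T, G T' := by
    apply intervalIntegral.integral_congr_ae
    apply Filter.Eventually.of_forall
    intro x hx
    rw [Set.uIoc_of_le hT.le] at hx
    have hx0 : 0 < x := hx.1
    show Dfun μ ε ε0 kB x = G x
    rw [Dfun]
    exact (hG x hx0).deriv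
  rw [hDG, hftc, hg0, sub_zero, one_div, inv_mul_cancel_left₀ hT.ne']

end
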